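/- arXiv:1502.05282 — 8 statements merged into one kernel-verified Lean document; each statement's English description precedes it below -/
import Mathlib

section
/- Let n ≥ 1 and i ∈ Fin n. Let B, C, D be types, ∂_j : B → C (j ∈ Fin n) and ∂′_k : C → D (k ∈ Fin (n−1)) be functions satisfying the simplicial identities ∂′_k ∘ ∂_j = ∂′_{j−1} ∘ ∂_k for all k < j (k ∈ Fin (n−1), j ∈ Fin n). Define the cycle sets Δ_n = {x : Fin (n+1) → B | ∂_k(x_j) = ∂_{j−1}(x_k) for all 0 ≤ k < j ≤ n} and Δ_{n−1} = {y : Fin n → C | ∂′_k(y_j) = ∂′_{j−1}(y_k) for all 0 ≤ k < j ≤ n−1}, and the horn set Λ^i = {x : {j ∈ Fin (n+1) | j ≠ i} → B | ∂_k(x_j) = ∂_{j−1}(x_k) for all k < j with k ≠ i and j ≠ i}. Then: (1) the map r : Λ^i → C^n given by r(x)_j = ∂_{i−1}(x_j) for j < i and r(x)_j = ∂_i(x_{j+1}) for i ≤ j ≤ n−1 takes values in Δ_{n−1}; (2) the map s : B → C^n, s(b)_j = ∂_j(b), takes values in Δ_{n−1}; (3) the square with top the forgetful map Δ_n → Λ^i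 (omitting the i-th entry), left the i-th projection Δ_n → B, right r, and bottom s, commutes and is a pullback, i.e. the map Δ_n → {(x, b) ∈ Λ^i × B | r(x) = s(b)} sending a cycle to (its i-th-entry-omitted tuple, its i-th entry) is a bijection. -/
/-- The set of `n`-cycles for faces `face i : B → C`, `i ∈ Fin n`:
tuples `x : Fin (n+1) → B` with `face k (x j) = face (j-1) (x k)` for `k < j`. -/
def cycles {n : ℕ} {B C : Type*} (face : Fin n → B → C) :
    Set (Fin (n + 1) → B) :=
  {x | ∀ k j : Fin (n + 1), (h : k.val < j.val) →
    face ⟨k.val, by have := j.isLt; omega⟩ (x j) =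
      face ⟨j.val - 1, by have := j.isLt; omega⟩ (x k)}

/-- The set of `(n-1)`-cycles: tuples `y : Fin n → C` with
`face' k (y j) = face' (j-1) (y k)` for `k < j`. -/
def lowerCycles (n : ℕ) {C D : Type*} (face' : Fin (n - 1) → C → D) :
    Set (Fin n → C) :=
  {y | ∀ k j : Fin n, (h : k.val < j.val) →
    face' ⟨k.val, by have := j.isLt; omega⟩ (y j) =
      face' ⟨j.val - 1, by have := j.isLt; omega⟩ (y k)}

/-- The set of `(n,i)`-horns: tuples indexed by `j ≠ i` satisfying the cycle
conditions whenever both indices differ from `i`. -/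
def horn {n : ℕ} {B C : Type*} (face : Fin n → B → C) (i : Fin n) :
    Set ({j : Fin (n + 1) // j ≠ i.castSucc} → B) :=
  {x | ∀ k j : {j : Fin (n + 1) // j ≠ i.castSucc}, (h : k.1.val < j.1.val) →
    face ⟨k.1.val, by have := j.1.isLt; omega⟩ (x j) =
      face ⟨j.1.val - 1, by have := j.1.isLt; omega⟩ (x k)}

/-- The map `r` from horns to `(n-1)`-tuples: `r(x)_j = face (i-1) (x j)` for `j < i`
and `r(x)_j = face i (x (j+1))` for `i ≤ j`. -/
def hornToLower {n : ℕ} {B C : Type*} (face : Fin n → B → C) (i : Fin n)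
    (x : {j : Fin (n + 1) // j ≠ i.castSucc} → B) : Fin n → C :=
  fun j =>
    if h : j.val < i.val then
      face ⟨i.val - 1, by have := i.isLt; omega⟩
        (x ⟨j.castSucc, by
          simp only [ne_eq, Fin.castSucc_inj]
          exact Fin.ne_of_lt h⟩)
    else
      face i
        (x ⟨j.succ, by
          intro hEq
          have hv := congrArg Fin.val hEq
          simp only [Fin.val_succ, Fin.coe_castSucc] at hv
          omega⟩)

/-- The square relating `n`-cycles, `(n,i)`-horns, `B` and `(n-1)`-cycles is a
pullback (Set-level form of the paper's Lemma on Δ and Λ). -/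
theorem cycles_horn_pullback {n : ℕ} (hn : 1 ≤ n) {B C D : Type*}
    (face : Fin n → B → C) (face' : Fin (n - 1) → C → D) (i : Fin n)
    (hsimp : ∀ (k : Fin (n - 1)) (j : Fin n), (h : k.val < j.val) → ∀ b : B,
      face' k (face j b) =
        face' ⟨j.val - 1, by have := j.isLt; omega⟩
          (face ⟨k.val, by have := k.isLt; omega⟩ b)) :
    (∀ x ∈ horn face i, hornToLower face i x ∈ lowerCycles n face') ∧
    (∀ b : B, (fun j : Fin n => face j b) ∈ lowerCycles n face') ∧
    Set.BijOn
      (fun x : Fin (n + 1) → B =>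
        ((fun j : {j : Fin (n + 1) // j ≠ i.castSucc} => x j.1, x i.castSucc) :
          ({j : Fin (n + 1) // j ≠ i.castSucc} → B) × B))
      (cycles face)
      {p : ({j : Fin (n + 1) // j ≠ i.castSucc} → B) × B |
        p.1 ∈ horn face i ∧ hornToLower face i p.1 = fun j : Fin n => face j p.2} := by
  classical
  have fc : ∀ (a b : Fin n) (w : B), a.val = b.val → face a w = face b w := by
    intro a b w h; congr 1; exact Fin.ext h
  have fc' : ∀ (a b : Fin (n-1)) (w : C), a.val = b.val → face' a w = face' b w := by
    intro a b w h; congr 1; exact Fin.ext h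
  -- clean version of hsimp
  have hs : ∀ (a b : ℕ) (ha : a < n - 1) (hb : b < n) (hab : a < b) (w : B),
      face' ⟨a, ha⟩ (face ⟨b, hb⟩ w) =
      face' ⟨b - 1, by omega⟩ (face ⟨a, by omega⟩ w) := by
    intro a b ha hb hab w
    exact hsimp ⟨a, ha⟩ ⟨b, hb⟩ hab w
  refine ⟨?_, ?_, ?_, ?_, ?_⟩
  · -- part 1
    intro x hx k j hkj
    have hh : ∀ (a b : ℕ) (ha : a < n + 1) (hb : b < n + 1)
        (hai : a ≠ i.val) (hbi : b ≠ i.val) (hab : a < b),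
        face ⟨a, by omega⟩ (x ⟨⟨b, hb⟩, fun hEq => hbi (congrArg Fin.val hEq)⟩) =
        face ⟨b - 1, by omega⟩ (x ⟨⟨a, ha⟩, fun hEq => hai (congrArg Fin.val hEq)⟩) := by
      intro a b ha hb hai hbi hab
      exact hx ⟨⟨a, ha⟩, fun hEq => hai (congrArg Fin.val hEq)⟩
        ⟨⟨b, hb⟩, fun hEq => hbi (congrArg Fin.val hEq)⟩ hab
    have hj5 := j.isLt
    have hk5 := k.isLt
    have hi5 := i.isLt
    unfold hornToLower
    by_cases hji : j.val < i.val
    · -- k < j < i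
      have hki : k.val < i.val := by omega
      rw [dif_pos hji, dif_pos hki]
      calc face' ⟨k.val, by omega⟩ (face ⟨i.val - 1, by omega⟩ (x _))
          = face' ⟨i.val - 1 - 1, by omega⟩ (face ⟨k.val, by omega⟩
              (x ⟨j.castSucc, _⟩)) := hs k.val (i.val - 1) (by omega) (by omega) (by omega) _
        _ = face' ⟨i.val - 1 - 1, by omega⟩ (face ⟨j.val - 1, by omega⟩
              (x ⟨k.castSucc, _⟩)) := by
              exact congrArg _ (hh k.val j.val (by omega) (by omega) (by omega) (by omega) hkj)
        _ = face' ⟨j.val - 1, by omega⟩ (face ⟨i.val - 1, by omega⟩ (x _)) :=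
              (hs (j.val - 1) (i.val - 1) (by omega) (by omega) (by omega) _).symm
    · by_cases hki : k.val < i.val
      · -- k < i ≤ j
        rw [dif_neg hji, dif_pos hki]
        calc face' ⟨k.val, by omega⟩ (face i (x ⟨j.succ, _⟩))
            = face' ⟨i.val - 1, by omega⟩ (face ⟨k.val, by omega⟩ (x ⟨j.succ, _⟩)) :=
              hs k.val i.val (by omega) (by omega) (by omega) _
          _ = face' ⟨i.val - 1, by omega⟩ (face ⟨j.val + 1 - 1, by omega⟩
                (x ⟨k.castSucc, _⟩)) := by
              exact congrArg _ (hh k.val (j.val + 1) (by omega) (by omega)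
                (by omega) (by omega) (by omega))
          _ = face' ⟨i.val - 1, by omega⟩ (face ⟨j.val, by omega⟩ (x _)) := by
              exact congrArg _ (fc _ _ _ rfl)
          _ = face' ⟨j.val - 1, by omega⟩ (face ⟨i.val - 1, by omega⟩ (x _)) :=
              hs (i.val - 1) j.val (by omega) (by omega) (by omega) _
      · -- i ≤ k < j
        rw [dif_neg hji, dif_neg hki]
        calc face' ⟨k.val, by omega⟩ (face i (x ⟨j.succ, _⟩))
            = face' ⟨k.val + 1 - 1, by omega⟩ (face ⟨i.val, by omega⟩ (x _)) := by
              exact fc' _ _ _ rfl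
          _ = face' ⟨i.val, by omega⟩ (face ⟨k.val + 1, by omega⟩ (x ⟨j.succ, _⟩)) :=
              (hs i.val (k.val + 1) (by omega) (by omega) (by omega) _).symm
          _ = face' ⟨i.val, by omega⟩ (face ⟨j.val + 1 - 1, by omega⟩
                (x ⟨k.succ, _⟩)) := by
              exact congrArg _ (hh (k.val + 1) (j.val + 1) (by omega) (by omega)
                (by omega) (by omega) (by omega))
          _ = face' ⟨i.val, by omega⟩ (face ⟨j.val, by omega⟩ (x _)) := by
              exact congrArg _ (fc _ _ _ rfl)
          _ = face' ⟨j.val - 1, by omega⟩ (face ⟨i.val, by omega⟩ (x _)) :=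
              hs i.val j.val (by omega) (by omega) (by omega) _
          _ = face' ⟨j.val - 1, by omega⟩ (face i (x ⟨k.succ, _⟩)) := rfl
  · -- part 2
    intro b k j hkj
    exact hsimp ⟨k.val, by have := j.isLt; omega⟩ j hkj b
  · -- MapsTo
    intro x hx
    have hc : ∀ (a b : ℕ) (ha : a < n + 1) (hb : b < n + 1) (hab : a < b),
        face ⟨a, by omega⟩ (x ⟨b, hb⟩) = face ⟨b - 1, by omega⟩ (x ⟨a, ha⟩) := by
      intro a b ha hb hab
      exact hx ⟨a, ha⟩ ⟨b, hb⟩ hab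
    constructor
    · intro k j hkj
      exact hx k.1 j.1 hkj
    · funext j
      have hj5 := j.isLt
      have hi5 := i.isLt
      unfold hornToLower
      by_cases hji : j.val < i.val
      · rw [dif_pos hji]
        exact (hc j.val i.val (by omega) (by omega) hji).symm
      · rw [dif_neg hji]
        calc face i (x j.succ) = face ⟨i.val, by omega⟩ (x ⟨j.val + 1, by omega⟩) := rfl
          _ = face ⟨j.val + 1 - 1, by omega⟩ (x ⟨i.val, by omega⟩) :=
              hc i.val (j.val + 1) (by omega) (by omega) (by omega)
          _ = face j (x i.castSucc) := fc _ _ _ rfl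
  · -- InjOn
    intro x hx y hy heq
    have h1 := congrArg Prod.fst heq
    have h2 := congrArg Prod.snd heq
    simp only at h1 h2
    funext j
    by_cases hj : j = i.castSucc
    · subst hj; exact h2
    · exact congrFun h1 ⟨j, hj⟩
  · -- SurjOn
    intro p hp
    obtain ⟨hhorn, hlow⟩ := hp
    have hi5 := i.isLt
    have hl1 : ∀ (a : ℕ) (ha : a < n) (hlt : a < i.val),
        face ⟨i.val - 1, by omega⟩
          (p.1 ⟨⟨a, by omega⟩, fun hEq => by have := congrArg Fin.val hEq; simp only [Fin.coe_castSucc] at this; omega⟩) =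
        face ⟨a, ha⟩ p.2 := by
      intro a ha hlt
      have := congrFun hlow ⟨a, ha⟩
      unfold hornToLower at this
      rw [dif_pos hlt] at this
      exact this
    have hl2 : ∀ (a : ℕ) (ha : a < n) (hge : i.val ≤ a),
        face i
          (p.1 ⟨⟨a + 1, by omega⟩, fun hEq => by have := congrArg Fin.val hEq; simp only [Fin.coe_castSucc] at this; omega⟩) =
        face ⟨a, ha⟩ p.2 := by
      intro a ha hge
      have := congrFun hlow ⟨a, ha⟩
      unfold hornToLower at this
      rw [dif_neg (show ¬ ((⟨a, ha⟩ : Fin n).val < i.val) from by show ¬ (a < i.val); omega)] at this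
      exact this
    refine ⟨fun j => if hj : j = i.castSucc then p.2 else p.1 ⟨j, hj⟩, ?_, ?_⟩
    · intro k j hkj
      have hj5 := j.isLt
      have hk5 := k.isLt
      by_cases hk : k = i.castSucc
      · have hj : ¬ j = i.castSucc := by
          intro h; subst h; subst hk; omega
        subst hk
        simp only [dif_pos rfl, dif_neg hj]
        have hgt : i.val < j.val := hkj
        have := hl2 (j.val - 1) (by omega) (by omega)
        calc face ⟨(i.castSucc).val, by omega⟩ (p.1 ⟨j, hj⟩)
            = face i (p.1 ⟨⟨j.val - 1 + 1, by omega⟩, _⟩) := by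
              refine congrArg₂ _ (Fin.ext ?_) (congrArg p.1 (Subtype.ext (Fin.ext ?_))) <;>
                simp <;> omega
          _ = face ⟨j.val - 1, by omega⟩ p.2 := hl2 (j.val - 1) (by omega) (by omega)
      · by_cases hj : j = i.castSucc
        · subst hj
          simp only [dif_pos rfl, dif_neg hk]
          have hlt : k.val < i.val := hkj
          calc face ⟨k.val, by omega⟩ p.2
              = face ⟨i.val - 1, by omega⟩ (p.1 ⟨⟨k.val, by omega⟩, _⟩) :=
                (hl1 k.val (by omega) hlt).symm
            _ = face ⟨(i.castSucc).val - 1, by omega⟩ (p.1 ⟨k, hk⟩) := by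
                refine congrArg₂ _ (Fin.ext ?_) (congrArg p.1 (Subtype.ext (Fin.ext ?_))) <;>
                  simp <;> omega
        · simp only [dif_neg hk, dif_neg hj]
          exact hhorn ⟨k, hk⟩ ⟨j, hj⟩ hkj
    · refine Prod.ext ?_ ?_
      · funext j
        simp only [dif_neg j.2]
      · simp
end

section
/- Let 𝒜 be an abelian category. Consider objects A₁, A₀, B₁, B₀ and morphisms a : A₁ → A₀, b : B₁ → B₀, f₁ : A₁ → B₁, f₀ : A₀ → B₀ together with sections ā : A₀ → A₁ (a ∘ ā = 1), b̄ : B₀ → B₁ (b ∘ b̄ = 1), f̄₁ : B₁ → A₁ (f₁ ∘ f̄₁ = 1), f̄₀ : B₀ → A₀ (f₀ ∘ f̄₀ = 1), such that all squares commute: b ∘ f₁ = f₀ ∘ a, f₁ ∘ ā = b̄ ∘ f₀, a ∘ f̄₁ = f̄₀ ∘ b, and ā ∘ f̄₀ = f̄₁ ∘ b̄. Let P = A₀ ×_{B₀} B₁ be the pullback of f₀ and b, with projections π₀, π₁, and let ⟨a, f₁⟩ : A₁ → P be the comparison morphism. Then there is exactly one morphism ν : P → A₁ satisfying ν ∘ ⟨1_{A₀},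 b̄ ∘ f₀⟩ = ā and ν ∘ ⟨f̄₀ ∘ b, 1_{B₁}⟩ = f̄₁, and this ν satisfies ⟨a, f₁⟩ ∘ ν = 1_P; in particular ⟨a, f₁⟩ is a split epimorphism. -/
open CategoryTheory CategoryTheory.Limits

/-- In an abelian category, given a double split epimorphism, the comparison
morphism `⟨a, f₁⟩` to the pullback of `f₀` and `b` is a split epimorphism,
with a unique splitting `ν` compatible with the given sections. -/
theorem doubleSplitEpi_comparison_splitEpi
    {𝒜 : Type*} [Category 𝒜] [Abelian 𝒜] {A₁ A₀ B₁ B₀ : 𝒜}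
    (a : A₁ ⟶ A₀) (b : B₁ ⟶ B₀) (f₁ : A₁ ⟶ B₁) (f₀ : A₀ ⟶ B₀)
    (abar : A₀ ⟶ A₁) (bbar : B₀ ⟶ B₁) (f₁bar : B₁ ⟶ A₁) (f₀bar : B₀ ⟶ A₀)
    (ha : abar ≫ a = 𝟙 A₀) (hb : bbar ≫ b = 𝟙 B₀)
    (hf₁ : f₁bar ≫ f₁ = 𝟙 B₁) (hf₀ : f₀bar ≫ f₀ = 𝟙 B₀)
    (sq : f₁ ≫ b = a ≫ f₀)
    (sqbar₁ : abar ≫ f₁ = f₀ ≫ bbar)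
    (sqbar₂ : f₁bar ≫ a = b ≫ f₀bar)
    (sqbar₃ : f₀bar ≫ abar = bbar ≫ f₁bar) :
    ∃ ν : pullback f₀ b ⟶ A₁,
      (pullback.lift (𝟙 A₀) (f₀ ≫ bbar)
          (by rw [Category.id_comp, Category.assoc, hb, Category.comp_id]) ≫ ν = abar ∧
        pullback.lift (b ≫ f₀bar) (𝟙 B₁)
          (by rw [Category.assoc, hf₀, Category.comp_id, Category.id_comp]) ≫ ν = f₁bar ∧
        ν ≫ pullback.lift a f₁ sq.symm = 𝟙 (pullback f₀ b)) ∧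
      (∀ ν' : pullback f₀ b ⟶ A₁,
        pullback.lift (𝟙 A₀) (f₀ ≫ bbar)
          (by rw [Category.id_comp, Category.assoc, hb, Category.comp_id]) ≫ ν' = abar →
        pullback.lift (b ≫ f₀bar) (𝟙 B₁)
          (by rw [Category.assoc, hf₀, Category.comp_id, Category.id_comp]) ≫ ν' = f₁bar →
        ν' = ν) ∧
      IsSplitEpi (pullback.lift a f₁ sq.symm) := by
  have hb' := reassoc_of% hb
  have ha' := reassoc_of% ha
  have hf₀' := reassoc_of% hf₀
  have hf₁' := reassoc_of% hf₁
  have hc := reassoc_of% (pullback.condition (f := f₀) (g := b))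
  set π₀ : pullback f₀ b ⟶ A₀ := pullback.fst f₀ b with hπ₀
  set π₁ : pullback f₀ b ⟶ B₁ := pullback.snd f₀ b with hπ₁
  set ν : pullback f₀ b ⟶ A₁ :=
    π₀ ≫ abar + (π₁ - π₁ ≫ b ≫ bbar) ≫ f₁bar with hν
  have key : ∀ ν' : pullback f₀ b ⟶ A₁,
      pullback.lift (𝟙 A₀) (f₀ ≫ bbar)
        (by rw [Category.id_comp, Category.assoc, hb, Category.comp_id]) ≫ ν' = abar →
      pullback.lift (b ≫ f₀bar) (𝟙 B₁)
        (by rw [Category.assoc, hf₀, Category.comp_id, Category.id_comp]) ≫ ν' = f₁bar →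
      ν' = ν := by
    intro ν' h1 h2
    have hid : 𝟙 (pullback f₀ b) =
        π₀ ≫ pullback.lift (𝟙 A₀) (f₀ ≫ bbar)
          (by rw [Category.id_comp, Category.assoc, hb, Category.comp_id]) +
        (π₁ - π₁ ≫ b ≫ bbar) ≫ pullback.lift (b ≫ f₀bar) (𝟙 B₁)
          (by rw [Category.assoc, hf₀, Category.comp_id, Category.id_comp]) := by
      apply pullback.hom_ext
      · simp [hπ₀, hπ₁, Preadditive.sub_comp, hb', hc]
        erw [pullback.lift_fst, pullback.lift_fst]
        simp [hb']
      · simp only [hπ₀, hπ₁, Category.id_comp, Preadditive.add_comp,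
          Preadditive.sub_comp, Category.assoc, pullback.lift_snd, Category.comp_id, hc]
        erw [pullback.condition_assoc]
        abel
    calc ν' = 𝟙 (pullback f₀ b) ≫ ν' := by rw [Category.id_comp]
      _ = π₀ ≫ abar + (π₁ - π₁ ≫ b ≫ bbar) ≫ f₁bar := by
          simp only [hid, Preadditive.add_comp, Category.assoc, h1, h2]
      _ = ν := hν.symm
  have c1 : pullback.lift (𝟙 A₀) (f₀ ≫ bbar)
      (by rw [Category.id_comp, Category.assoc, hb, Category.comp_id]) ≫ ν = abar := by
    simp only [hν, hπ₀, hπ₁, Preadditive.comp_add, Preadditive.comp_sub,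
      pullback.lift_fst_assoc, pullback.lift_snd_assoc, Category.id_comp,
      Category.assoc, hb']
    simp [hb']
    erw [pullback.lift_snd_assoc, pullback.lift_snd_assoc]
    simp [hb']
  have c2 : pullback.lift (b ≫ f₀bar) (𝟙 B₁)
      (by rw [Category.assoc, hf₀, Category.comp_id, Category.id_comp]) ≫ ν = f₁bar := by
    simp only [hν, hπ₀, hπ₁, Preadditive.comp_add, Preadditive.comp_sub,
      pullback.lift_fst_assoc, pullback.lift_snd_assoc, Category.id_comp,
      Category.assoc, hf₀', Preadditive.sub_comp, sqbar₃]
    abel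
  have c3 : ν ≫ pullback.lift a f₁ sq.symm = 𝟙 (pullback f₀ b) := by
    apply pullback.hom_ext
    · simp only [hν, hπ₀, hπ₁, Preadditive.add_comp, Preadditive.sub_comp,
        Category.assoc, pullback.lift_fst, ha', ha, Category.comp_id,
        Category.id_comp, sqbar₂, hb']
      abel
    · simp only [hν, hπ₀, hπ₁, Preadditive.add_comp, Preadditive.sub_comp,
        Category.assoc, pullback.lift_snd, hf₁', hf₁, Category.comp_id,
        Category.id_comp, sqbar₁, hc]
      erw [pullback.condition_assoc]
      abel
  exact ⟨ν, ⟨c1, c2, c3⟩, key, ⟨⟨ν, c3⟩⟩⟩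
end

section
/- Let f : X → Z be a surjective group homomorphism and g : Y → Z a group homomorphism admitting a section s : Z → Y with g ∘ s = id_Z (i.e. g is a split epimorphism). Let P = {(x, y) ∈ X × Y | f(x) = g(y)} be the pullback of f and g, with projections pr_X and pr_Y. Then the canonical homomorphism from the abelianization Ab(P) to the pullback {(u, v) ∈ Ab(X) × Ab(Y) | (Ab f)(u) = (Ab g)(v)}, induced by Ab(pr_X) and Ab(pr_Y), is an isomorphism of groups. Here Ab(G) = G/[G,G] and Ab h denotes the homomorphism induced on abelianizations. -/
/-- The pullback of two group homomorphisms `f : X → Z`, `g : Y → Z`,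
as a subgroup of `X × Y`. -/
def pullbackSubgroup {X Y Z : Type*} [Group X] [Group Y] [Group Z]
    (f : X →* Z) (g : Y →* Z) : Subgroup (X × Y) where
  carrier := {p | f p.1 = g p.2}
  one_mem' := by simp
  mul_mem' := by
    intro p q hp hq
    simp only [Set.mem_setOf_eq, Prod.fst_mul, Prod.snd_mul, map_mul] at *
    rw [hp, hq]
  inv_mem' := by
    intro p hp
    simp only [Set.mem_setOf_eq, Prod.fst_inv, Prod.snd_inv, map_inv] at *
    rw [hp]

section Aux

variable {G H : Type*} [Group G] [Group H]

private lemma aux_mem_comm_map (φ : G →* H) {x : G}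
    (hx : x ∈ commutator G) : φ x ∈ commutator H := by
  have h : φ x ∈ (commutator G).map φ := ⟨x, hx, rfl⟩
  rw [commutator_def, Subgroup.map_commutator] at h
  exact Subgroup.commutator_mono le_top le_top h

private lemma aux_comm_map_surj (φ : G →* H) (hφ : Function.Surjective φ) :
    commutator H = (commutator G).map φ := by
  rw [commutator_def, commutator_def, Subgroup.map_commutator,
    Subgroup.map_top_of_surjective _ hφ]

private lemma aux_of_surj : Function.Surjective (Abelianization.of : G → Abelianization G) :=
  fun u => Quotient.exists_rep u

private lemma aux_of_eq_one {x : G} (h : (Abelianization.of x : Abelianization G) = 1) :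
    x ∈ commutator G :=
  (QuotientGroup.eq_one_iff x).mp h

private lemma aux_of_eq_one' {x : G} (h : x ∈ commutator G) :
    (Abelianization.of x : Abelianization G) = 1 :=
  (QuotientGroup.eq_one_iff x).mpr h

end Aux

section Key

variable {X Y Z : Type*} [Group X] [Group Y] [Group Z]

private lemma aux_mem_pullback (f : X →* Z) (g : Y →* Z) (p : X × Y) :
    p ∈ pullbackSubgroup f g ↔ f p.1 = g p.2 := Iff.rfl

/-- The section `X → P` of the first projection, `x ↦ (x, s (f x))`. -/
private def tmap (f : X →* Z) (g : Y →* Z) (s : Z →* Y) (hs : ∀ z : Z, g (s z) = z) :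
    X →* ↥(pullbackSubgroup f g) :=
  ((MonoidHom.id X).prod (s.comp f)).codRestrict _
    (fun x => show f x = g (s (f x)) by rw [hs])

private lemma tmap_coe (f : X →* Z) (g : Y →* Z) (s : Z →* Y) (hs : ∀ z : Z, g (s z) = z)
    (x : X) : ((tmap f g s hs x : X × Y)) = (x, s (f x)) := rfl

private lemma key (f : X →* Z) (hf : Function.Surjective f)
    (g : Y →* Z) (s : Z →* Y) (hs : ∀ z : Z, g (s z) = z)
    (p : ↥(pullbackSubgroup f g))
    (h1 : (p : X × Y).1 ∈ commutator X) (h2 : (p : X × Y).2 ∈ commutator Y) :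
    p ∈ commutator ↥(pullbackSubgroup f g) := by
  let P := pullbackSubgroup f g
  let t := tmap f g s hs
  have ht : ∀ x ∈ commutator X, t x ∈ commutator ↥P := fun x hx => aux_mem_comm_map t hx
  -- the second projection is surjective
  have hprY : Function.Surjective ((MonoidHom.snd X Y).comp P.subtype) := by
    intro y
    obtain ⟨x, hx⟩ := hf (g y)
    exact ⟨⟨(x, y), hx⟩, rfl⟩
  -- y' := s (f p.1)⁻¹ * p.2 is in the commutator subgroup of Y and in ker g
  set y' : Y := (s (f (p : X × Y).1))⁻¹ * (p : X × Y).2 with hy'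
  have hy'comm : y' ∈ commutator Y :=
    mul_mem (inv_mem (aux_mem_comm_map (s.comp f) h1)) h2
  -- find c in the commutator of P projecting to y'
  have : y' ∈ (commutator ↥P).map ((MonoidHom.snd X Y).comp P.subtype) := by
    rw [← aux_comm_map_surj _ hprY]; exact hy'comm
  obtain ⟨c, hc, hcy⟩ := this
  have hcy' : (c : X × Y).2 = y' := hcy
  -- the element a = (1, y')
  set a : ↥P := (t (p : X × Y).1)⁻¹ * p with ha
  have haval : (a : X × Y) = (1, y') := by
    apply Prod.ext
    · show ((t (p : X × Y).1 : X × Y)).1⁻¹ * (p : X × Y).1 = 1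
      rw [tmap_coe]
      exact inv_mul_cancel _
    · show ((t (p : X × Y).1 : X × Y)).2⁻¹ * (p : X × Y).2 = y'
      rw [tmap_coe]
  -- the element b = a * c⁻¹ = ((c.1)⁻¹, 1)
  set b : ↥P := a * c⁻¹ with hb
  have hbval : (b : X × Y) = ((c : X × Y).1⁻¹, 1) := by
    apply Prod.ext
    · show (a : X × Y).1 * (c : X × Y).1⁻¹ = (c : X × Y).1⁻¹
      rw [haval]; exact one_mul _
    · show (a : X × Y).2 * (c : X × Y).2⁻¹ = 1
      rw [haval, hcy']
      exact mul_inv_cancel _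
  have hc1comm : (c : X × Y).1 ∈ commutator X :=
    aux_mem_comm_map ((MonoidHom.fst X Y).comp P.subtype) hc
  have hfb : f ((c : X × Y).1⁻¹) = 1 := by
    have := b.2
    rw [aux_mem_pullback] at this
    rw [hbval] at this
    simpa using this
  -- b = t ((c.1)⁻¹)
  have hbt : b = t ((c : X × Y).1⁻¹) := by
    apply Subtype.ext
    rw [hbval, tmap_coe, hfb, map_one]
  have hbcomm : b ∈ commutator ↥P := by
    rw [hbt]; exact ht _ (inv_mem hc1comm)
  have hacomm : a ∈ commutator ↥P := by
    have : a = b * c := by rw [hb, inv_mul_cancel_right]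
    rw [this]; exact mul_mem hbcomm hc
  have : p = t (p : X × Y).1 * a := by rw [ha, mul_inv_cancel_left]
  rw [this]
  exact mul_mem (ht _ h1) hacomm

end Key

/-- Abelianization preserves the pullback of a surjection `f` along a split
epimorphism `g`: the canonical homomorphism from `Ab(X ×_Z Y)` to the pullback
of `Ab f` and `Ab g` is an isomorphism of groups. -/
theorem abelianization_preserves_pullback_along_split_epi
    {X Y Z : Type*} [Group X] [Group Y] [Group Z]
    (f : X →* Z) (hf : Function.Surjective f)
    (g : Y →* Z) (s : Z →* Y) (hs : ∀ z : Z, g (s z) = z) :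
    Set.BijOn
      (fun u : Abelianization ↥(pullbackSubgroup f g) =>
        ((Abelianization.map ((MonoidHom.fst X Y).comp (pullbackSubgroup f g).subtype) u,
          Abelianization.map ((MonoidHom.snd X Y).comp (pullbackSubgroup f g).subtype) u) :
          Abelianization X × Abelianization Y))
      Set.univ
      {q : Abelianization X × Abelianization Y |
        Abelianization.map f q.1 = Abelianization.map g q.2} := by
  set P := pullbackSubgroup f g with hP
  set pr1 := (MonoidHom.fst X Y).comp P.subtype with hpr1
  set pr2 := (MonoidHom.snd X Y).comp P.subtype with hpr2
  refine ⟨?_, ?_, ?_⟩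
  · -- maps to
    intro u _
    obtain ⟨p, rfl⟩ := aux_of_surj u
    show Abelianization.map f (Abelianization.map pr1 (Abelianization.of p)) =
      Abelianization.map g (Abelianization.map pr2 (Abelianization.of p))
    rw [Abelianization.map_of, Abelianization.map_of, Abelianization.map_of,
      Abelianization.map_of]
    exact congrArg Abelianization.of p.2
  · -- injective
    intro u _ v _ h
    have h1 : Abelianization.map pr1 u = Abelianization.map pr1 v := congrArg Prod.fst h
    have h2 : Abelianization.map pr2 u = Abelianization.map pr2 v := congrArg Prod.snd h
    have hw1 : Abelianization.map pr1 (u * v⁻¹) = 1 := by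
      rw [map_mul, map_inv, h1, mul_inv_cancel]
    have hw2 : Abelianization.map pr2 (u * v⁻¹) = 1 := by
      rw [map_mul, map_inv, h2, mul_inv_cancel]
    obtain ⟨p, hp⟩ := aux_of_surj (u * v⁻¹)
    rw [← hp, Abelianization.map_of] at hw1 hw2
    have hkey := key f hf g s hs p (aux_of_eq_one hw1) (aux_of_eq_one hw2)
    have : u * v⁻¹ = 1 := by rw [← hp]; exact aux_of_eq_one' hkey
    exact mul_inv_eq_one.mp this
  · -- surjective
    rintro ⟨u, v⟩ hq
    obtain ⟨x, rfl⟩ := aux_of_surj u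
    obtain ⟨y, rfl⟩ := aux_of_surj v
    simp only [Set.mem_setOf_eq, Abelianization.map_of] at hq
    have hdiv : (f x)⁻¹ * g y ∈ commutator Z := by
      have : (Abelianization.of ((f x)⁻¹ * g y) : Abelianization Z) = 1 := by
        rw [map_mul, map_inv, hq, inv_mul_cancel]
      exact aux_of_eq_one this
    have : (f x)⁻¹ * g y ∈ (commutator X).map f := by
      rw [← aux_comm_map_surj f hf]; exact hdiv
    obtain ⟨c, hc, hfc⟩ := this
    have hmem : (x * c, y) ∈ P := by
      rw [aux_mem_pullback]
      show f (x * c) = g y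
      rw [map_mul, hfc, mul_inv_cancel_left]
    refine ⟨Abelianization.of (⟨(x * c, y), hmem⟩ : ↥P), trivial, ?_⟩
    show (Abelianization.map pr1 _, Abelianization.map pr2 _) = _
    rw [Abelianization.map_of, Abelianization.map_of]
    have : (pr1 (⟨(x * c, y), hmem⟩ : ↥P)) = x * c := rfl
    rw [this]
    have : (pr2 (⟨(x * c, y), hmem⟩ : ↥P)) = y := rfl
    rw [this]
    have : (Abelianization.of (x * c) : Abelianization X) = Abelianization.of x := by
      rw [map_mul, aux_of_eq_one' hc, mul_one]
    rw [this]
end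

section
/- Let X, D, C be groups and d : X → D, c : X → C group homomorphisms; set A = ker d ∩ ker c. Let □(d,c) be the subgroup of X × X × X × X consisting of all quadruples (δ, α, γ, β) with c(δ) = c(α), c(γ) = c(β), d(δ) = d(γ) and d(α) = d(β), and let ◇(d,c) be the subgroup of X × X × X consisting of all triples (α, γ, β) with c(γ) = c(β) and d(α) = d(β). Then for every (δ, α, γ, β) ∈ □(d,c) the element δ·α⁻¹·β·γ⁻¹ lies in A, and the map Φ : □(d,c) → A × ◇(d,c) sending (δ, α, γ, β) to (δ·α⁻¹·β·γ⁻¹, (α, γ, β)) is a bijection, with inverse sending (a, (α, γ, β)) to (a·γ·β⁻¹·α, α, γ, β). -/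
/-- The set of two-fold diamonds `(δ, α, γ, β)` for `d : X → D`, `c : X → C`. -/
def diamondSet {X C D : Type*} [Group X] [Group C] [Group D]
    (d : X →* D) (c : X →* C) : Set (X × X × X × X) :=
  {q | c q.1 = c q.2.1 ∧ c q.2.2.1 = c q.2.2.2 ∧
       d q.1 = d q.2.2.1 ∧ d q.2.1 = d q.2.2.2}

/-- The set of open diamonds `(α, γ, β)` (diamonds with the `δ`-face missing). -/
def openDiamondSet {X C D : Type*} [Group X] [Group C] [Group D]
    (d : X →* D) (c : X →* C) : Set (X × X × X) :=
  {t | c t.2.1 = c t.2.2 ∧ d t.1 = d t.2.2}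

/-- The word `δ·α⁻¹·β·γ⁻¹` of a diamond `(δ, α, γ, β)`. -/
def phiWord {X : Type*} [Group X] (q : X × X × X × X) : X :=
  q.1 * q.2.1⁻¹ * q.2.2.2 * q.2.2.1⁻¹

/-- The map `Φ : (δ, α, γ, β) ↦ (δ·α⁻¹·β·γ⁻¹, (α, γ, β))`. -/
def phiMap {X : Type*} [Group X] (q : X × X × X × X) : X × (X × X × X) :=
  (phiWord q, q.2)

/-- The map `Θ : (a, (α, γ, β)) ↦ (a·γ·β⁻¹·α, α, γ, β)`. -/
def thetaMap {X : Type*} [Group X] (p : X × (X × X × X)) : X × X × X × X :=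
  (p.1 * p.2.2.1 * p.2.2.2⁻¹ * p.2.1, p.2)

/-- For any `d : X → D`, `c : X → C` with `A = ker d ∩ ker c`, the word of any
diamond lies in `A`, and `Φ` is a bijection `□(d,c) → A × ◇(d,c)` with inverse `Θ`. -/
theorem diamond_bijection {X C D : Type*} [Group X] [Group C] [Group D]
    (d : X →* D) (c : X →* C) :
    (∀ q ∈ diamondSet d c, phiWord q ∈ d.ker ⊓ c.ker) ∧
    Set.BijOn phiMap (diamondSet d c)
      {p : X × (X × X × X) | p.1 ∈ d.ker ⊓ c.ker ∧ p.2 ∈ openDiamondSet d c} ∧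
    Set.InvOn thetaMap phiMap (diamondSet d c)
      {p : X × (X × X × X) | p.1 ∈ d.ker ⊓ c.ker ∧ p.2 ∈ openDiamondSet d c} := by
  have hmem : ∀ q ∈ diamondSet d c, phiWord q ∈ d.ker ⊓ c.ker := by
    rintro ⟨δ, α, γ, β⟩ ⟨h1, h2, h3, h4⟩
    rw [Subgroup.mem_inf, MonoidHom.mem_ker, MonoidHom.mem_ker]
    simp only [phiWord, map_mul, map_inv]
    exact ⟨by rw [h3, h4]; group, by rw [h1, h2]; group⟩
  have hmaps : Set.MapsTo phiMap (diamondSet d c)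
      {p : X × (X × X × X) | p.1 ∈ d.ker ⊓ c.ker ∧ p.2 ∈ openDiamondSet d c} := by
    rintro ⟨δ, α, γ, β⟩ hq
    exact ⟨hmem _ hq, hq.2.1, hq.2.2.2⟩
  have hmaps' : Set.MapsTo thetaMap
      {p : X × (X × X × X) | p.1 ∈ d.ker ⊓ c.ker ∧ p.2 ∈ openDiamondSet d c}
      (diamondSet d c) := by
    rintro ⟨a, α, γ, β⟩ ⟨hA, h1, h2⟩
    obtain ⟨hd, hc⟩ := Subgroup.mem_inf.mp hA
    rw [MonoidHom.mem_ker] at hd hc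
    refine ⟨?_, h1, ?_, h2⟩ <;>
      simp only [thetaMap, map_mul, map_inv, hd, hc, one_mul]
    · simp [h1]
    · simp [h2]
  have hleft : Set.LeftInvOn thetaMap phiMap (diamondSet d c) := by
    rintro ⟨δ, α, γ, β⟩ _
    simp only [phiMap, thetaMap, phiWord, Prod.mk.injEq]
    constructor
    · group
    · trivial
  have hright : Set.RightInvOn thetaMap phiMap
      {p : X × (X × X × X) | p.1 ∈ d.ker ⊓ c.ker ∧ p.2 ∈ openDiamondSet d c} := by
    rintro ⟨a, α, γ, β⟩ _
    simp only [phiMap, thetaMap, phiWord, Prod.mk.injEq]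
    constructor
    · group
    · trivial
  exact ⟨hmem, ⟨hmaps, fun x hx y hy h => by
      have := congrArg thetaMap h
      rwa [hleft hx, hleft hy] at this,
    fun p hp => ⟨thetaMap p, hmaps' hp, hright hp⟩⟩,
    fun x hx => hleft hx, fun p hp => hright hp⟩
end

section
/- Let X, D, C be groups and d : X → D, c : X → C group homomorphisms; set A = ker d ∩ ker c, and let Φ : □(d,c) → A × ◇(d,c) be the map Φ(δ, α, γ, β) = (δ·α⁻¹·β·γ⁻¹, (α, γ, β)). Then the following are equivalent: (i) the commutator subgroup ⁅ker d, ker c⁆ is trivial and every element of A commutes with every element of X (⁅A, X⁆ = 1); (ii) Φ is a homomorphism of groups; (iii) A is an abelian group and Φ is an isomorphism of groups □(d,c) ≅ A × ◇(d,c). -/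
/-- Characterisation of centrality in degree two for groups: the commutator
conditions `⁅ker d, ker c⁆ = 1` and `⁅A, X⁆ = 1` hold iff `Φ` is a homomorphism,
iff `A` is abelian and `Φ` is an isomorphism `□(d,c) ≅ A × ◇(d,c)`. -/
theorem central_iff_diamond_iso {X C D : Type*} [Group X] [Group C] [Group D]
    (d : X →* D) (c : X →* C) :
    ((⁅d.ker, c.ker⁆ = (⊥ : Subgroup X) ∧
        ∀ a ∈ d.ker ⊓ c.ker, ∀ x : X, a * x = x * a) ↔
      (∀ p ∈ diamondSet d c, ∀ q ∈ diamondSet d c,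
        phiMap (p * q) = phiMap p * phiMap q)) ∧
    ((⁅d.ker, c.ker⁆ = (⊥ : Subgroup X) ∧
        ∀ a ∈ d.ker ⊓ c.ker, ∀ x : X, a * x = x * a) ↔
      ((∀ a ∈ d.ker ⊓ c.ker, ∀ b ∈ d.ker ⊓ c.ker, a * b = b * a) ∧
        (∀ p ∈ diamondSet d c, ∀ q ∈ diamondSet d c,
          phiMap (p * q) = phiMap p * phiMap q) ∧
        Set.BijOn phiMap (diamondSet d c)
          {p : X × (X × X × X) | p.1 ∈ d.ker ⊓ c.ker ∧ p.2 ∈ openDiamondSet d c})) := by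
  -- ⁅ker d, ker c⁆ = ⊥ iff elementwise commutation
  have hcomm_iff : ⁅d.ker, c.ker⁆ = (⊥ : Subgroup X) ↔
      ∀ k ∈ d.ker, ∀ h ∈ c.ker, k * h = h * k := by
    rw [eq_bot_iff, Subgroup.commutator_le]
    constructor
    · intro H k hk h hh
      have := H k hk h hh
      rw [Subgroup.mem_bot] at this
      exact commutatorElement_eq_one_iff_mul_comm.mp this
    · intro H k hk h hh
      rw [Subgroup.mem_bot]
      exact commutatorElement_eq_one_iff_mul_comm.mpr (H k hk h hh)
  -- the word of any diamond lies in A = ker d ⊓ ker c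
  have hword : ∀ p ∈ diamondSet d c, phiWord p ∈ d.ker ⊓ c.ker := by
    rintro ⟨δ, α, γ, β⟩ ⟨h1, h2, h3, h4⟩
    rw [Subgroup.mem_inf]
    refine ⟨?_, ?_⟩
    · show d (δ * α⁻¹ * β * γ⁻¹) = 1
      simp only [map_mul, map_inv, h3, h4]
      group
    · show c (δ * α⁻¹ * β * γ⁻¹) = 1
      simp only [map_mul, map_inv, h1, ← h2]
      group
  -- conditions ⇒ Φ is a homomorphism
  have dir1 : (⁅d.ker, c.ker⁆ = (⊥ : Subgroup X) ∧
      ∀ a ∈ d.ker ⊓ c.ker, ∀ x : X, a * x = x * a) →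
      (∀ p ∈ diamondSet d c, ∀ q ∈ diamondSet d c,
        phiMap (p * q) = phiMap p * phiMap q) := by
    rintro ⟨hC, hZ⟩ p hp q hq
    have comm1 := hcomm_iff.mp hC
    have hwq := hword q hq
    obtain ⟨δ, α, γ, β⟩ := p
    obtain ⟨δ', α', γ', β'⟩ := q
    obtain ⟨h1, h2, h3, h4⟩ := hp
    obtain ⟨h1', h2', h3', h4'⟩ := hq
    have hk : α⁻¹ * β ∈ d.ker := by
      rw [MonoidHom.mem_ker, map_mul, map_inv, h4]
      group
    have hh : δ' * α'⁻¹ ∈ c.ker := by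
      rw [MonoidHom.mem_ker, map_mul, map_inv, h1']
      group
    have hc : (δ' * α'⁻¹) * (α⁻¹ * β) = (α⁻¹ * β) * (δ' * α'⁻¹) :=
      (comm1 _ hk _ hh).symm
    have hz : (δ' * α'⁻¹ * β' * γ'⁻¹) * γ⁻¹ = γ⁻¹ * (δ' * α'⁻¹ * β' * γ'⁻¹) :=
      hZ _ hwq _
    refine Prod.ext ?_ rfl
    show (δ * δ') * (α * α')⁻¹ * (β * β') * (γ * γ')⁻¹ =
      (δ * α⁻¹ * β * γ⁻¹) * (δ' * α'⁻¹ * β' * γ'⁻¹)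
    calc (δ * δ') * (α * α')⁻¹ * (β * β') * (γ * γ')⁻¹
        = δ * ((δ' * α'⁻¹) * (α⁻¹ * β)) * (β' * γ'⁻¹) * γ⁻¹ := by group
      _ = δ * ((α⁻¹ * β) * (δ' * α'⁻¹)) * (β' * γ'⁻¹) * γ⁻¹ := by rw [hc]
      _ = (δ * α⁻¹ * β) * ((δ' * α'⁻¹ * β' * γ'⁻¹) * γ⁻¹) := by group
      _ = (δ * α⁻¹ * β) * (γ⁻¹ * (δ' * α'⁻¹ * β' * γ'⁻¹)) := by rw [hz]
      _ = (δ * α⁻¹ * β * γ⁻¹) * (δ' * α'⁻¹ * β' * γ'⁻¹) := by group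
  -- Φ a homomorphism ⇒ the conditions
  have dir2 : (∀ p ∈ diamondSet d c, ∀ q ∈ diamondSet d c,
        phiMap (p * q) = phiMap p * phiMap q) →
      (⁅d.ker, c.ker⁆ = (⊥ : Subgroup X) ∧
        ∀ a ∈ d.ker ⊓ c.ker, ∀ x : X, a * x = x * a) := by
    intro hhom
    constructor
    · rw [hcomm_iff]
      intro k hk h hh
      rw [MonoidHom.mem_ker] at hk
      rw [MonoidHom.mem_ker] at hh
      have hq : ((1 : X), (1 : X), k, k) ∈ diamondSet d c := by
        refine ⟨by simp, rfl, by simp [hk], by simp [hk]⟩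
      have hp : (h, (1 : X), h, (1 : X)) ∈ diamondSet d c := by
        refine ⟨by simp [hh], by simp [hh], rfl, by simp⟩
      have e := congrArg Prod.fst (hhom _ hq _ hp)
      have e' : (1 * h) * (1 * 1 : X)⁻¹ * (k * 1) * (k * h)⁻¹ =
          (1 * 1⁻¹ * k * k⁻¹) * (h * 1⁻¹ * 1 * h⁻¹) := e
      calc k * h = ((1 * h) * (1 * 1 : X)⁻¹ * (k * 1) * (k * h)⁻¹)⁻¹ * h * k := by group
        _ = ((1 * 1⁻¹ * k * k⁻¹) * (h * 1⁻¹ * 1 * h⁻¹))⁻¹ * h * k := by rw [e']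
        _ = h * k := by group
    · intro a ha x
      rw [Subgroup.mem_inf, MonoidHom.mem_ker, MonoidHom.mem_ker] at ha
      have hp : (x, x, x, x) ∈ diamondSet d c := ⟨rfl, rfl, rfl, rfl⟩
      have hq : (a, (1 : X), (1 : X), (1 : X)) ∈ diamondSet d c := by
        refine ⟨by simp [ha.2], rfl, by simp [ha.1], rfl⟩
      have e := congrArg Prod.fst (hhom _ hp _ hq)
      have e' : (x * a) * (x * 1)⁻¹ * (x * 1) * (x * 1)⁻¹ =
          (x * x⁻¹ * x * x⁻¹) * (a * 1⁻¹ * 1 * 1⁻¹) := e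
      have e2 : x * a = a * x := by
        calc x * a = ((x * a) * (x * 1)⁻¹ * (x * 1) * (x * 1)⁻¹) * x := by group
          _ = ((x * x⁻¹ * x * x⁻¹) * (a * 1⁻¹ * 1 * 1⁻¹)) * x := by rw [e']
          _ = a * x := by group
      exact e2.symm
  -- Φ is always a bijection onto A × ◇ (no hypotheses needed)
  have hbij : Set.BijOn phiMap (diamondSet d c)
      {p : X × (X × X × X) | p.1 ∈ d.ker ⊓ c.ker ∧ p.2 ∈ openDiamondSet d c} := by
    refine ⟨?_, ?_, ?_⟩
    · rintro ⟨δ, α, γ, β⟩ hp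
      obtain ⟨h1, h2, h3, h4⟩ := hp
      exact ⟨hword _ ⟨h1, h2, h3, h4⟩, h2, h4⟩
    · rintro ⟨δ, α, γ, β⟩ _ ⟨δ', α', γ', β'⟩ _ h
      have h1 := congrArg Prod.fst h
      have h2 := congrArg Prod.snd h
      simp only [phiMap] at h1 h2
      obtain ⟨rfl, rfl, rfl⟩ : α = α' ∧ γ = γ' ∧ β = β' := by
        exact ⟨congrArg (fun t => t.1) h2, congrArg (fun t => t.2.1) h2,
          congrArg (fun t => t.2.2) h2⟩
      have : δ * α⁻¹ * β * γ⁻¹ = δ' * α⁻¹ * β * γ⁻¹ := h1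
      have : δ = δ' := by
        have := mul_right_cancel (mul_right_cancel (mul_right_cancel this))
        exact this
      rw [this]
    · rintro ⟨a, α, γ, β⟩ ⟨ha, h2, h4⟩
      rw [Subgroup.mem_inf, MonoidHom.mem_ker, MonoidHom.mem_ker] at ha
      refine ⟨(a * γ * β⁻¹ * α, α, γ, β), ⟨?_, h2, ?_, h4⟩, ?_⟩
      · show c (a * γ * β⁻¹ * α) = c α
        simp only [map_mul, map_inv, ha.2, ← h2]
        group
      · show d (a * γ * β⁻¹ * α) = d γ
        simp only [map_mul, map_inv, ha.1, h4]
        group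
      · refine Prod.ext ?_ rfl
        show (a * γ * β⁻¹ * α) * α⁻¹ * β * γ⁻¹ = a
        group
  refine ⟨⟨dir1, dir2⟩, ⟨fun h => ⟨fun a ha b hb => h.2 a ha b, dir1 h, hbij⟩,
    fun h => dir2 h.2.1⟩⟩
end

section
/- Let X, D, C be groups and d : X → D, c : X → C group homomorphisms; set A = ker d ∩ ker c. Assume that the commutator subgroup ⁅ker d, ker c⁆ is trivial and that every element of A commutes with every element of X. Then the map w : □(d,c) → A sending (δ, α, γ, β) to δ·α⁻¹·β·γ⁻¹ is a group homomorphism, and w(a, 1, 1, 1) = a for every a ∈ A; that is, w is a retraction of the embedding A → □(d,c), a ↦ (a, 1, 1, 1). -/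
/-- If `⁅ker d, ker c⁆ = 1` and `⁅A, X⁆ = 1` (where `A = ker d ⊓ ker c`), the
word map `w : □(d,c) → A, (δ,α,γ,β) ↦ δ·α⁻¹·β·γ⁻¹` is a group homomorphism and a
retraction of the embedding `a ↦ (a,1,1,1)` of `A` into `□(d,c)`. -/
theorem diamond_word_retraction {X C D : Type*} [Group X] [Group C] [Group D]
    (d : X →* D) (c : X →* C)
    (h1 : ⁅d.ker, c.ker⁆ = (⊥ : Subgroup X))
    (h2 : ∀ a ∈ d.ker ⊓ c.ker, ∀ x : X, a * x = x * a) :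
    (∀ q ∈ diamondSet d c, phiWord q ∈ d.ker ⊓ c.ker) ∧
    (∀ p ∈ diamondSet d c, ∀ q ∈ diamondSet d c,
      phiWord (p * q) = phiWord p * phiWord q) ∧
    (∀ a : X, a ∈ d.ker ⊓ c.ker →
      ((a, 1, 1, 1) : X × X × X × X) ∈ diamondSet d c ∧
      phiWord ((a, 1, 1, 1) : X × X × X × X) = a) := by
  -- elements of ker d commute with elements of ker c
  have comm : ∀ g ∈ d.ker, ∀ h ∈ c.ker, g * h = h * g := by
    intro g hg h hh
    have hmem : open scoped commutatorElement in ⁅g, h⁆ ∈ ⁅d.ker, c.ker⁆ := Subgroup.commutator_mem_commutator hg hh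
    rw [h1, Subgroup.mem_bot] at hmem
    have := commutatorElement_eq_one_iff_commute.mp hmem
    exact this.eq
  -- membership of phiWord in A
  have hmemA : ∀ q ∈ diamondSet d c, phiWord q ∈ d.ker ⊓ c.ker := by
    rintro ⟨q1, q2, q3, q4⟩ ⟨hc1, hc2, hd1, hd2⟩
    refine Subgroup.mem_inf.mpr ⟨?_, ?_⟩
    · simp only [MonoidHom.mem_ker, phiWord, map_mul, map_inv]
      simp only [diamondSet, Set.mem_setOf_eq] at *
      rw [hd1, hd2]; group
    · simp only [MonoidHom.mem_ker, phiWord, map_mul, map_inv]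
      simp only [diamondSet, Set.mem_setOf_eq] at *
      rw [hc1, hc2]; group
  refine ⟨hmemA, ?_, ?_⟩
  · rintro ⟨p1, p2, p3, p4⟩ hp ⟨q1, q2, q3, q4⟩ hq
    obtain ⟨hpc1, hpc2, hpd1, hpd2⟩ := hp
    obtain ⟨hqc1, hqc2, hqd1, hqd2⟩ := hq
    -- a := q1 * q2⁻¹ ∈ ker c
    have ha : q1 * q2⁻¹ ∈ c.ker := by
      rw [MonoidHom.mem_ker, map_mul, map_inv, hqc1, mul_inv_cancel]
    -- b := p2⁻¹ * p4 ∈ ker d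
    have hb : p2⁻¹ * p4 ∈ d.ker := by
      rw [MonoidHom.mem_ker, map_mul, map_inv, ← hpd2, inv_mul_cancel]
    have hcomm1 : (p2⁻¹ * p4) * (q1 * q2⁻¹) = (q1 * q2⁻¹) * (p2⁻¹ * p4) :=
      comm _ hb _ ha
    have hA : phiWord (q1, q2, q3, q4) ∈ d.ker ⊓ c.ker :=
      hmemA _ ⟨hqc1, hqc2, hqd1, hqd2⟩
    have hcent := h2 _ hA
    show (p1 * q1) * (p2 * q2)⁻¹ * (p4 * q4) * (p3 * q3)⁻¹ =
      (p1 * p2⁻¹ * p4 * p3⁻¹) * (q1 * q2⁻¹ * q4 * q3⁻¹)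
    have key : p1 * ((q1 * q2⁻¹) * (p2⁻¹ * p4)) * (q4 * q3⁻¹) * p3⁻¹ =
        p1 * ((p2⁻¹ * p4) * (q1 * q2⁻¹)) * (q4 * q3⁻¹) * p3⁻¹ := by
      rw [hcomm1]
    have key2 : p1 * ((p2⁻¹ * p4) * (q1 * q2⁻¹)) * (q4 * q3⁻¹) * p3⁻¹ =
        (p1 * p2⁻¹ * p4) * (q1 * q2⁻¹ * q4 * q3⁻¹) * p3⁻¹ := by group
    have key3 : (q1 * q2⁻¹ * q4 * q3⁻¹) * p3⁻¹ = p3⁻¹ * (q1 * q2⁻¹ * q4 * q3⁻¹) := by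
      have := hcent p3⁻¹
      simpa [phiWord] using this
    calc (p1 * q1) * (p2 * q2)⁻¹ * (p4 * q4) * (p3 * q3)⁻¹
        = p1 * ((q1 * q2⁻¹) * (p2⁻¹ * p4)) * (q4 * q3⁻¹) * p3⁻¹ := by group
      _ = (p1 * p2⁻¹ * p4) * (q1 * q2⁻¹ * q4 * q3⁻¹) * p3⁻¹ := by rw [key, key2]
      _ = (p1 * p2⁻¹ * p4) * (p3⁻¹ * (q1 * q2⁻¹ * q4 * q3⁻¹)) := by
          rw [mul_assoc, key3]
      _ = (p1 * p2⁻¹ * p4 * p3⁻¹) * (q1 * q2⁻¹ * q4 * q3⁻¹) := by group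
  · intro a ha
    obtain ⟨had, hac⟩ := Subgroup.mem_inf.mp ha
    refine ⟨⟨?_, ?_, ?_, ?_⟩, ?_⟩
    · simp [MonoidHom.mem_ker.mp hac]
    · rfl
    · simp [MonoidHom.mem_ker.mp had]
    · rfl
    · simp [phiWord]
end

section
/- Let X, D, C be groups and d : X → D, c : X → C group homomorphisms; set A = ker d ∩ ker c. Assume that the commutator subgroup ⁅ker d, ker c⁆ is trivial and that every element of A commutes with every element of X. Then the map ι : ◇(d,c) → □(d,c) sending (α, γ, β) to (γ·β⁻¹·α, α, γ, β) is a group homomorphism, and π ∘ ι = id, where π : □(d,c) → ◇(d,c) is the homomorphism forgetting the first coordinate, π(δ, α, γ, β) = (α, γ, β). -/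
/-- The splitting `ι : (α, γ, β) ↦ (γ·β⁻¹·α, α, γ, β)`. -/
def iotaMap {X : Type*} [Group X] (t : X × X × X) : X × X × X × X :=
  (t.2.1 * t.2.2⁻¹ * t.1, t)

/-- If `⁅ker d, ker c⁆ = 1` and `⁅A, X⁆ = 1` (where `A = ker d ∩ ker c`), the map
`ι : ◇(d,c) → □(d,c), (α,γ,β) ↦ (γ·β⁻¹·α, α, γ, β)` is a group homomorphism
splitting the projection `π` which forgets the first coordinate. -/
theorem diamond_splitting {X C D : Type*} [Group X] [Group C] [Group D]
    (d : X →* D) (c : X →* C)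
    (h1 : ⁅d.ker, c.ker⁆ = (⊥ : Subgroup X))
    (h2 : ∀ a ∈ d.ker ⊓ c.ker, ∀ x : X, a * x = x * a) :
    (∀ t ∈ openDiamondSet d c, iotaMap t ∈ diamondSet d c) ∧
    (∀ t ∈ openDiamondSet d c, ∀ u ∈ openDiamondSet d c,
      iotaMap (t * u) = iotaMap t * iotaMap u) ∧
    (∀ t ∈ openDiamondSet d c, (iotaMap t).2 = t) := by
  have comm : ∀ x ∈ d.ker, ∀ y ∈ c.ker, x * y = y * x := by
    intro x hx y hy
    open scoped commutatorElement in
    have : ⁅x, y⁆ ∈ ⁅d.ker, c.ker⁆ := Subgroup.commutator_mem_commutator hx hy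
    rw [h1, Subgroup.mem_bot, commutatorElement_eq_one_iff_mul_comm] at this
    exact this
  refine ⟨?_, ?_, ?_⟩
  · rintro ⟨α, γ, β⟩ ⟨hc, hd⟩
    refine ⟨?_, hc, ?_, hd⟩ <;> simp_all [iotaMap]
  · rintro ⟨α₁, γ₁, β₁⟩ ⟨hc₁, hd₁⟩ ⟨α₂, γ₂, β₂⟩ ⟨hc₂, hd₂⟩
    simp only [openDiamondSet, Set.mem_setOf_eq] at hc₁ hd₁ hc₂ hd₂
    have key : (γ₂ * β₂⁻¹) * (β₁⁻¹ * α₁) = (β₁⁻¹ * α₁) * (γ₂ * β₂⁻¹) := by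
      refine (comm _ ?_ _ ?_).symm
      · simp [MonoidHom.mem_ker, hd₁]
      · simp [MonoidHom.mem_ker, hc₂]
    simp only [iotaMap, Prod.mk_mul_mk, Prod.mk.injEq, mul_inv_rev]
    refine ⟨?_, trivial⟩
    calc γ₁ * γ₂ * (β₂⁻¹ * β₁⁻¹) * (α₁ * α₂)
        = γ₁ * ((γ₂ * β₂⁻¹) * (β₁⁻¹ * α₁)) * α₂ := by group
      _ = γ₁ * ((β₁⁻¹ * α₁) * (γ₂ * β₂⁻¹)) * α₂ := by rw [key]
      _ = γ₁ * β₁⁻¹ * α₁ * (γ₂ * β₂⁻¹ * α₂) := by group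
  · rintro t _; rfl
end

section
/- Let n ≥ 1, let X be a group, and for each i ∈ Fin n let f_i : X → Y_i be a group homomorphism; set A = ⋂_{i ∈ Fin n} ker f_i. Let ⬜ be the diamond group: the subgroup of the product ∏_{J ⊆ Fin n} X consisting of all families m = (m_J)_{J ⊆ Fin n} such that f_i(m_J) = f_i(m_{J ∪ {i}}) for every i ∈ Fin n and every J ⊆ Fin n with i ∉ J. For a fixed I ⊆ Fin n, let ◇^I be the punctured diamond group: the subgroup of ∏_{J ⊆ Fin n, J ≠ I} X consisting of all families (m_J)_{J ≠ I} satisfying the same conditions whenever both J ≠ I and J ∪ {i} ≠ I, and let π^I : ⬜ → ◇^I be the homomorphism that forgets the entry at I. Then π^I is surjective, and its kernel is the subgroup {m ∈ ⬜ | m_J = 1 for all J ≠ I}, which is isomorphic to A via m ↦ m_I. -/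
open scoped symmDiff

private lemma sd_mem_left {α : Type*} {A B : Set α} {z : α} (h1 : z ∈ A) (h2 : z ∉ B) :
    z ∈ A ∆ B :=
  Set.mem_symmDiff.mpr (Or.inl ⟨h1, h2⟩)

private lemma sd_ne_of_not_mem {α : Type*} {A B D : Set α} {z : α}
    (hzD : z ∈ D) (hz : z ∉ A ∆ B) : A ∆ D ≠ B := by
  intro h
  have hD : D = A ∆ B := by rw [← h, symmDiff_symmDiff_cancel_left]
  exact hz (hD ▸ hzD)

def dfill {n : ℕ} {X : Type*} [Group X] (M : Set (Fin n) → X) : ℕ → Set (Fin n) → X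
  | 0, _ => 1
  | 1, I => M (I ∆ {j : Fin n | (j : ℕ) = 0})
  | (k+2), I =>
      dfill M (k+1) I * (dfill M (k+1) (I ∆ {j : Fin n | (j : ℕ) = k+1}))⁻¹ *
        M (I ∆ {j : Fin n | (j : ℕ) = k+1})

private lemma dfill_one {n : ℕ} {X : Type*} [Group X] (M : Set (Fin n) → X) (I : Set (Fin n)) :
    dfill M 1 I = M (I ∆ {j : Fin n | (j : ℕ) = 0}) := rfl

private lemma dfill_two {n : ℕ} {X : Type*} [Group X] (M : Set (Fin n) → X) (k : ℕ)
    (I : Set (Fin n)) :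
    dfill M (k+2) I = dfill M (k+1) I *
      (dfill M (k+1) (I ∆ {j : Fin n | (j : ℕ) = k+1}))⁻¹ *
        M (I ∆ {j : Fin n | (j : ℕ) = k+1}) := rfl

private lemma dfill_toggle {n : ℕ} {X : Type*} [Group X] {Y : Fin n → Type*}
    [∀ i, Group (Y i)] (f : ∀ i, X →* Y i) (I₀ : Set (Fin n)) (M : Set (Fin n) → X)
    (hM : ∀ (i : Fin n) (J : Set (Fin n)), J ≠ I₀ → J ∆ ({i} : Set (Fin n)) ≠ I₀ →
      f i (M J) = f i (M (J ∆ {i})))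
    (k : ℕ) :
    ∀ I : Set (Fin n), (∀ j : Fin n, j ∈ I ∆ I₀ → k + 1 ≤ (j : ℕ)) →
      ∀ i : Fin n, k + 1 ≤ (i : ℕ) →
      f i (dfill M (k+1) I) = f i (dfill M (k+1) (I ∆ {i})) := by
  induction k with
  | zero =>
    intro I hI i hi
    have hzlt : (0 : ℕ) < n := lt_of_le_of_lt (Nat.zero_le _) i.isLt
    have hzval : ((⟨0, hzlt⟩ : Fin n) : ℕ) = 0 := rfl
    have hzD : (⟨0, hzlt⟩ : Fin n) ∈ {j : Fin n | (j : ℕ) = 0} := rfl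
    have hzi : (⟨0, hzlt⟩ : Fin n) ∉ ({i} : Set (Fin n)) := by
      simp only [Set.mem_singleton_iff]
      intro h
      rw [Fin.ext_iff, hzval] at h
      omega
    have hzI : (⟨0, hzlt⟩ : Fin n) ∉ I ∆ I₀ := fun h => by
      have := hI _ h; rw [hzval] at this; omega
    rw [dfill_one, dfill_one, symmDiff_right_comm I {i}]
    exact hM i (I ∆ {j : Fin n | (j : ℕ) = 0}) (sd_ne_of_not_mem hzD hzI)
      (by rw [symmDiff_assoc]; exact sd_ne_of_not_mem (sd_mem_left hzD hzi) hzI)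
  | succ k ih =>
    intro I hI i hi
    have hkn : k + 1 < n := by have := i.isLt; omega
    have hwval : ((⟨k+1, hkn⟩ : Fin n) : ℕ) = k + 1 := rfl
    have hwD : (⟨k+1, hkn⟩ : Fin n) ∈ {j : Fin n | (j : ℕ) = k+1} := rfl
    have hwi : (⟨k+1, hkn⟩ : Fin n) ∉ ({i} : Set (Fin n)) := by
      simp only [Set.mem_singleton_iff]
      intro h
      rw [Fin.ext_iff, hwval] at h
      omega
    have hwI : (⟨k+1, hkn⟩ : Fin n) ∉ I ∆ I₀ := fun h => by
      have := hI _ h; rw [hwval] at this; omega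
    rw [dfill_two, dfill_two, symmDiff_right_comm I {i}]
    set D : Set (Fin n) := {j : Fin n | (j : ℕ) = k+1} with hD
    have hI2 : ∀ j : Fin n, j ∈ (I ∆ D) ∆ I₀ → k + 1 ≤ (j : ℕ) := by
      intro j hj
      rw [symmDiff_right_comm] at hj
      rcases Set.mem_symmDiff.mp hj with ⟨h1, _⟩ | ⟨h1, _⟩
      · have := hI j h1; omega
      · rw [hD] at h1; have : (j : ℕ) = k + 1 := h1; omega
    have e1 : f i (dfill M (k+1) I) = f i (dfill M (k+1) (I ∆ {i})) :=
      ih I (fun j hj => by have := hI j hj; omega) i (by omega)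
    have e2 : f i (dfill M (k+1) (I ∆ D)) = f i (dfill M (k+1) ((I ∆ D) ∆ {i})) :=
      ih (I ∆ D) hI2 i (by omega)
    have e3 : f i (M (I ∆ D)) = f i (M ((I ∆ D) ∆ {i})) :=
      hM i _ (sd_ne_of_not_mem hwD hwI)
        (by rw [symmDiff_assoc]; exact sd_ne_of_not_mem (sd_mem_left hwD hwi) hwI)
    simp only [map_mul, map_inv, e1, e2, e3]

private lemma dfill_spec {n : ℕ} {X : Type*} [Group X] {Y : Fin n → Type*}
    [∀ i, Group (Y i)] (f : ∀ i, X →* Y i) (I₀ : Set (Fin n)) (M : Set (Fin n) → X)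
    (hM : ∀ (i : Fin n) (J : Set (Fin n)), J ≠ I₀ → J ∆ ({i} : Set (Fin n)) ≠ I₀ →
      f i (M J) = f i (M (J ∆ {i})))
    (k : ℕ) (hk : k + 1 ≤ n) :
    ∀ I : Set (Fin n), (∀ j : Fin n, j ∈ I ∆ I₀ → k + 1 ≤ (j : ℕ)) →
      ∀ i : Fin n, (i : ℕ) ≤ k →
      f i (dfill M (k+1) I) = f i (M (I ∆ {i})) := by
  induction k with
  | zero =>
    intro I hI i hi
    have h0 : ({j : Fin n | (j : ℕ) = 0} : Set (Fin n)) = {i} := by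
      ext j
      simp only [Set.mem_setOf_eq, Set.mem_singleton_iff, Fin.ext_iff]
      omega
    rw [dfill_one, h0]
  | succ k ih =>
    intro I hI i hi
    have hkn : k + 1 < n := by omega
    have hwval : ((⟨k+1, hkn⟩ : Fin n) : ℕ) = k + 1 := rfl
    have hwD : (⟨k+1, hkn⟩ : Fin n) ∈ {j : Fin n | (j : ℕ) = k+1} := rfl
    have hwI : (⟨k+1, hkn⟩ : Fin n) ∉ I ∆ I₀ := fun h => by
      have := hI _ h; rw [hwval] at this; omega
    rw [dfill_two]
    set D : Set (Fin n) := {j : Fin n | (j : ℕ) = k+1} with hD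
    have hI2 : ∀ j : Fin n, j ∈ (I ∆ D) ∆ I₀ → k + 1 ≤ (j : ℕ) := by
      intro j hj
      rw [symmDiff_right_comm] at hj
      rcases Set.mem_symmDiff.mp hj with ⟨h1, _⟩ | ⟨h1, _⟩
      · have := hI j h1; omega
      · rw [hD] at h1; have : (j : ℕ) = k + 1 := h1; omega
    rcases Nat.lt_or_ge (i : ℕ) (k+1) with hik | hik
    · have hwi : (⟨k+1, hkn⟩ : Fin n) ∉ ({i} : Set (Fin n)) := by
        simp only [Set.mem_singleton_iff]
        intro h
        rw [Fin.ext_iff, hwval] at h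
        omega
      have e1 : f i (dfill M (k+1) I) = f i (M (I ∆ {i})) :=
        ih (by omega) I (fun j hj => by have := hI j hj; omega) i (by omega)
      have e2 : f i (dfill M (k+1) (I ∆ D)) = f i (M ((I ∆ D) ∆ {i})) :=
        ih (by omega) (I ∆ D) hI2 i (by omega)
      have e3 : f i (M (I ∆ D)) = f i (M ((I ∆ D) ∆ {i})) :=
        hM i _ (sd_ne_of_not_mem hwD hwI)
          (by rw [symmDiff_assoc]; exact sd_ne_of_not_mem (sd_mem_left hwD hwi) hwI)
      simp only [map_mul, map_inv, e1, e2, ← e3]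
      group
    · have hDi : D = ({i} : Set (Fin n)) := by
        rw [hD]; ext j
        simp only [Set.mem_setOf_eq, Set.mem_singleton_iff, Fin.ext_iff]
        omega
      have t : f i (dfill M (k+1) I) = f i (dfill M (k+1) (I ∆ {i})) :=
        dfill_toggle f I₀ M hM k I (fun j hj => by have := hI j hj; omega) i (by omega)
      rw [hDi, map_mul, map_mul, map_inv, t]
      group

/-- The set of `n`-fold diamonds for homomorphisms `f i : X → Y i`: families
`m : Set (Fin n) → X` with `f i (m J) = f i (m (insert i J))` whenever `i ∉ J`. -/
def diamondGrpSet {n : ℕ} {X : Type*} [Group X] {Y : Fin n → Type*}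
    [∀ i, Group (Y i)] (f : ∀ i, X →* Y i) : Set (Set (Fin n) → X) :=
  {m | ∀ (i : Fin n) (J : Set (Fin n)), i ∉ J → f i (m J) = f i (m (insert i J))}

/-- The set of punctured `n`-fold diamonds (the entry at `I` is missing). -/
def puncturedGrpSet {n : ℕ} {X : Type*} [Group X] {Y : Fin n → Type*}
    [∀ i, Group (Y i)] (f : ∀ i, X →* Y i) (I : Set (Fin n)) :
    Set ({J : Set (Fin n) // J ≠ I} → X) :=
  {m | ∀ (i : Fin n) (J : Set (Fin n)) (hi : i ∉ J) (hJ : J ≠ I)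
      (hJ' : insert i J ≠ I),
    f i (m ⟨J, hJ⟩) = f i (m ⟨insert i J, hJ'⟩)}

/-- The projection `π^I` forgetting the entry at `I`. -/
def forgetEntry {n : ℕ} {X : Type*} (I : Set (Fin n)) (m : Set (Fin n) → X) :
    {J : Set (Fin n) // J ≠ I} → X :=
  fun J => m J.1

/-- `π^I : ⬜ → ◇^I` is surjective, its kernel consists of the diamonds which are
trivial away from `I`, and this kernel is isomorphic to `A = ⋂ ker (f i)`
via `m ↦ m I`. -/
theorem diamond_projection_kernel {n : ℕ} (hn : 1 ≤ n) {X : Type*} [Group X]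
    {Y : Fin n → Type*} [∀ i, Group (Y i)] (f : ∀ i, X →* Y i)
    (I : Set (Fin n)) :
    Set.MapsTo (forgetEntry I) (diamondGrpSet f) (puncturedGrpSet f I) ∧
    Set.SurjOn (forgetEntry I) (diamondGrpSet f) (puncturedGrpSet f I) ∧
    (∀ m ∈ diamondGrpSet f,
      (forgetEntry I m = 1 ↔ ∀ J : Set (Fin n), J ≠ I → m J = 1)) ∧
    Set.BijOn (fun m : Set (Fin n) → X => m I)
      {m | m ∈ diamondGrpSet f ∧ ∀ J : Set (Fin n), J ≠ I → m J = 1}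
      ((⨅ i, (f i).ker : Subgroup X) : Set X) := by
  classical
  obtain ⟨p, rfl⟩ : ∃ p, n = p + 1 := ⟨n - 1, by omega⟩
  refine ⟨?_, ?_, ?_, ?_, ?_, ?_⟩
  · -- MapsTo
    intro m hm
    intro i J hi hJ hJ'
    exact hm i J hi
  · -- SurjOn
    intro m hm
    set M : Set (Fin (p+1)) → X := fun J => if h : J = I then 1 else m ⟨J, h⟩ with hMdef
    have hMeq : ∀ (J : Set (Fin (p+1))) (h : J ≠ I), M J = m ⟨J, h⟩ := fun J h => dif_neg h
    have hMins : ∀ (i : Fin (p+1)) (J : Set (Fin (p+1))), i ∉ J → J ≠ I →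
        insert i J ≠ I → f i (M J) = f i (M (insert i J)) := by
      intro i J hi hJ hJ'
      rw [hMeq J hJ, hMeq _ hJ']
      exact hm i J hi hJ hJ'
    have hMsd : ∀ (i : Fin (p+1)) (J : Set (Fin (p+1))), J ≠ I →
        J ∆ ({i} : Set (Fin (p+1))) ≠ I → f i (M J) = f i (M (J ∆ {i})) := by
      intro i J hJ hJ'
      by_cases hi : i ∈ J
      · have h1 : J ∆ ({i} : Set (Fin (p+1))) = J \ {i} := by
          ext x
          simp only [Set.mem_symmDiff, Set.mem_singleton_iff, Set.mem_diff]
          rcases eq_or_ne x i with rfl | hx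
          · simp [hi]
          · simp [hx]
        have h2 : insert i (J \ ({i} : Set (Fin (p+1)))) = J := by
          ext x
          simp only [Set.mem_insert_iff, Set.mem_diff, Set.mem_singleton_iff]
          constructor
          · rintro (rfl | ⟨h, _⟩)
            · exact hi
            · exact h
          · intro hx
            rcases eq_or_ne x i with rfl | hne
            · exact Or.inl rfl
            · exact Or.inr ⟨hx, hne⟩
        rw [h1] at hJ' ⊢
        have h3 := hMins i (J \ {i}) (by simp) hJ' (by rw [h2]; exact hJ)
        rw [h2] at h3
        exact h3.symm
      · have h1 : J ∆ ({i} : Set (Fin (p+1))) = insert i J := by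
          ext x
          simp only [Set.mem_symmDiff, Set.mem_singleton_iff, Set.mem_insert_iff]
          rcases eq_or_ne x i with rfl | hx
          · simp [hi]
          · simp [hx]
        rw [h1] at hJ' ⊢
        exact hMins i J hi hJ hJ'
    have key : ∀ i : Fin (p+1),
        f i (dfill M (p+1) I) = f i (M (I ∆ {i})) := fun i =>
      dfill_spec f I M hMsd p le_rfl I (by simp) i (Nat.lt_succ_iff.mp i.isLt)
    refine ⟨fun J => if J = I then dfill M (p+1) I else M J, ?_, ?_⟩
    · intro i J hiJ
      by_cases hJ : J = I
      · subst hJ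
        have hins : insert i J ≠ J := fun h => hiJ (by rw [← h]; exact Set.mem_insert _ _)
        have hins2 : J ∆ ({i} : Set (Fin (p+1))) = insert i J := by
          ext x
          simp only [Set.mem_symmDiff, Set.mem_singleton_iff, Set.mem_insert_iff]
          rcases eq_or_ne x i with rfl | hx
          · simp [hiJ]
          · simp [hx]
        simp only [if_pos rfl, if_neg hins]
        rw [← hins2]
        exact key i
      · by_cases hJ' : insert i J = I
        · simp only [if_neg hJ, if_pos hJ']
          have hiI : i ∈ I := by rw [← hJ']; exact Set.mem_insert _ _
          have hJI : I ∆ ({i} : Set (Fin (p+1))) = J := by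
            rw [← hJ']
            ext x
            simp only [Set.mem_symmDiff, Set.mem_singleton_iff, Set.mem_insert_iff]
            rcases eq_or_ne x i with rfl | hx
            · simp [hiJ]
            · simp [hx]
          have h := key i
          rw [hJI] at h
          exact h.symm
        · simp only [if_neg hJ, if_neg hJ']
          exact hMins i J hiJ hJ hJ'
    · funext Jp
      obtain ⟨J, hJ⟩ := Jp
      show (if J = I then dfill M (p+1) I else M J) = m ⟨J, hJ⟩
      rw [if_neg hJ, hMeq J hJ]
  · -- kernel characterization
    intro m hm
    constructor
    · intro h J hJ
      have := congrFun h ⟨J, hJ⟩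
      simpa [forgetEntry] using this
    · intro h
      funext Jp
      obtain ⟨J, hJ⟩ := Jp
      show m J = 1
      exact h J hJ
  · -- BijOn: MapsTo
    rintro m ⟨hm, htriv⟩
    show m I ∈ ((⨅ i, (f i).ker : Subgroup X) : Set X)
    rw [SetLike.mem_coe, Subgroup.mem_iInf]
    intro i
    rw [MonoidHom.mem_ker]
    by_cases hi : i ∈ I
    · have h1 : i ∉ I \ ({i} : Set (Fin (p+1))) := by simp
      have h2 : insert i (I \ ({i} : Set (Fin (p+1)))) = I := by
        ext x
        simp only [Set.mem_insert_iff, Set.mem_diff, Set.mem_singleton_iff]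
        constructor
        · rintro (rfl | ⟨h, _⟩)
          · exact hi
          · exact h
        · intro hx
          rcases eq_or_ne x i with rfl | hne
          · exact Or.inl rfl
          · exact Or.inr ⟨hx, hne⟩
      have h4 : I \ ({i} : Set (Fin (p+1))) ≠ I := fun h => h1 (by rw [h]; exact hi)
      have h3 := hm i (I \ {i}) h1
      rw [h2, htriv _ h4, map_one] at h3
      exact h3.symm
    · have h4 : insert i I ≠ I := fun h => hi (by rw [← h]; exact Set.mem_insert _ _)
      have h3 := hm i I hi
      rw [htriv _ h4, map_one] at h3
      exact h3
  · -- BijOn: InjOn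
    rintro m1 ⟨hm1, ht1⟩ m2 ⟨hm2, ht2⟩ heq
    funext J
    by_cases hJ : J = I
    · rw [hJ]; exact heq
    · rw [ht1 J hJ, ht2 J hJ]
  · -- BijOn: SurjOn
    intro a ha
    rw [SetLike.mem_coe, Subgroup.mem_iInf] at ha
    refine ⟨fun J => if J = I then a else 1, ⟨?_, ?_⟩, ?_⟩
    · intro i J hiJ
      by_cases hJ : J = I
      · subst hJ
        have hins : insert i J ≠ J := fun h => hiJ (by rw [← h]; exact Set.mem_insert _ _)
        simp only [if_pos rfl, if_neg hins, map_one]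
        exact MonoidHom.mem_ker.mp (ha i)
      · by_cases hJ' : insert i J = I
        · simp only [if_neg hJ, if_pos hJ', map_one]
          exact (MonoidHom.mem_ker.mp (ha i)).symm
        · simp only [if_neg hJ, if_neg hJ']
    · intro J hJ
      simp only [if_neg hJ]
    · simp
end
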